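/- Let α > 0 and 0 < γ < 1. If A ⊆ ℕ is a J-set, then the image g_{α,γ}[A] = {⌊αn + γ⌋ : n ∈ A} is a J-set. -/

import Mathlib

open Finset

/-- The nonhomogeneous spectrum map `g_{α,γ}(n) = ⌊α n + γ⌋`. -/
noncomputable def spectrumMap (α γ : ℝ) (n : ℕ) : ℕ := ⌊α * n + γ⌋₊

/-- `A ⊆ ℕ` is a J-set: for every finite nonempty set `F` of sequences there exist
`a ∈ ℕ` and a finite nonempty `H ⊆ ℕ` with `a + ∑_{n ∈ H} f n ∈ A` for all `f ∈ F`. -/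
def JSet (A : Set ℕ) : Prop :=
  ∀ F : Finset (ℕ → ℕ), F.Nonempty →
    ∃ (a : ℕ) (H : Finset ℕ), H.Nonempty ∧ ∀ f ∈ F, a + ∑ n ∈ H, f n ∈ A


private lemma phi_sum_le (Hs : Finset ℕ) : ∑ m ∈ Hs, ((1:ℝ)/2)^m/8 ≤ 1/4 := by
  classical
  have h1 : Hs ⊆ Finset.range (Hs.sup id + 1) := by
    intro m hm
    exact Finset.mem_range.2 (Nat.lt_succ_of_le (Finset.le_sup (f := id) hm))
  have h2 : ∑ m ∈ Hs, ((1:ℝ)/2)^m/8 ≤ ∑ m ∈ Finset.range (Hs.sup id + 1), ((1:ℝ)/2)^m/8 :=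
    Finset.sum_le_sum_of_subset_of_nonneg h1 (by intros; positivity)
  have h3 : ∑ m ∈ Finset.range (Hs.sup id + 1), ((1:ℝ)/2)^m/8
      = (∑ m ∈ Finset.range (Hs.sup id + 1), ((1:ℝ)/2)^m)/8 := by
    rw [Finset.sum_div]
  have h4 := sum_geometric_two_le (Hs.sup id + 1)
  rw [h3] at h2
  linarith

private lemma aux_pigeon (α : ℝ) (hα : 0 < α) (F : Finset (ℕ → ℕ)) (f₀ : ℕ → ℕ)
    {ε : ℝ} (hε : 0 < ε) (L : ℕ) :
    ∃ t : ℕ × ℕ, L ≤ t.1 ∧ t.1 < t.2 ∧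
      ∀ f ∈ F, ∃ zz : ℤ, |(∑ n ∈ Finset.Ico t.1 t.2, ((f n : ℝ) - (f₀ n : ℝ))) - α * zz| < ε := by
  classical
  obtain ⟨K, hK⟩ := exists_nat_one_div_lt (div_pos hε hα)
  set S : (ℕ → ℕ) → ℕ → ℝ := fun f u => ∑ n ∈ Finset.range u, ((f n : ℝ) - (f₀ n : ℝ)) with hS
  have hcell : ∀ (f : ℕ → ℕ) (u : ℕ), (⌊Int.fract (S f u / α) * (K + 1)⌋).toNat < K + 1 := by
    intro f u
    have h0 : (0:ℝ) ≤ Int.fract (S f u / α) := Int.fract_nonneg _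
    have h1 : Int.fract (S f u / α) < 1 := Int.fract_lt_one _
    have h2 : Int.fract (S f u / α) * (K + 1) < ((K + 1 : ℕ) : ℝ) := by
      push_cast; nlinarith
    have h3 : ⌊Int.fract (S f u / α) * (K + 1)⌋ < ((K + 1 : ℕ) : ℤ) :=
      Int.floor_lt.2 (by exact_mod_cast h2)
    omega
  haveI : Infinite {u : ℕ // L ≤ u} := Infinite.of_injective
      (fun n : ℕ => (⟨L + n, Nat.le_add_right L n⟩ : {u : ℕ // L ≤ u}))
      (by intro a b h; have := congrArg Subtype.val h; simp only at this; omega)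
  have main : ∀ a b : {u : ℕ // L ≤ u}, a.1 < b.1 →
      (∀ f : {f : ℕ → ℕ // f ∈ F},
        ⌊Int.fract (S f.1 a.1 / α) * (K + 1)⌋ = ⌊Int.fract (S f.1 b.1 / α) * (K + 1)⌋) →
      ∃ t : ℕ × ℕ, L ≤ t.1 ∧ t.1 < t.2 ∧
        ∀ f ∈ F, ∃ zz : ℤ, |(∑ n ∈ Finset.Ico t.1 t.2, ((f n : ℝ) - (f₀ n : ℝ))) - α * zz| < ε := by
    intro a b hab hfl
    refine ⟨(a.1, b.1), a.2, hab, ?_⟩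
    intro f hf
    have hfl' := hfl ⟨f, hf⟩
    set x := Int.fract (S f a.1 / α) with hx
    set y := Int.fract (S f b.1 / α) with hy
    have hxy : |y - x| < 1 / (K + 1) := by
      have h1 : (⌊x * (K+1)⌋ : ℝ) ≤ x * (K+1) := Int.floor_le _
      have h2 : x * (K+1) < ⌊x * (K+1)⌋ + 1 := Int.lt_floor_add_one _
      have h3 : (⌊y * (K+1)⌋ : ℝ) ≤ y * (K+1) := Int.floor_le _
      have h4 : y * (K+1) < ⌊y * (K+1)⌋ + 1 := Int.lt_floor_add_one _
      rw [hfl'] at h1 h2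
      have hK1 : (0:ℝ) < (K:ℝ) + 1 := by positivity
      rw [abs_lt]
      constructor
      · rw [neg_lt, neg_sub]
        rw [lt_div_iff₀ hK1]
        nlinarith
      · rw [lt_div_iff₀ hK1]
        nlinarith
    refine ⟨⌊S f b.1 / α⌋ - ⌊S f a.1 / α⌋, ?_⟩
    have hsum : ∑ n ∈ Finset.Ico a.1 b.1, ((f n : ℝ) - (f₀ n : ℝ)) = S f b.1 - S f a.1 :=
      Finset.sum_Ico_eq_sub _ (le_of_lt hab)
    have hb : α * ((⌊S f b.1 / α⌋ : ℝ) + y) = S f b.1 := by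
      rw [hy, Int.floor_add_fract]
      field_simp
    have ha : α * ((⌊S f a.1 / α⌋ : ℝ) + x) = S f a.1 := by
      rw [hx, Int.floor_add_fract]
      field_simp
    have hrw : S f b.1 - S f a.1 - α * ((⌊S f b.1 / α⌋ : ℤ) - (⌊S f a.1 / α⌋ : ℤ) : ℤ)
        = α * (y - x) := by
      push_cast
      linear_combination ha - hb
    rw [hsum, hrw, abs_mul, abs_of_pos hα]
    calc α * |y - x| < α * (1/(K+1)) := by
          apply mul_lt_mul_of_pos_left hxy hα
      _ < α * (ε/α) := by
          apply mul_lt_mul_of_pos_left _ hα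
          exact_mod_cast hK
      _ = ε := by field_simp
  obtain ⟨u, v, huv, hmap⟩ := Finite.exists_ne_map_eq_of_infinite
    (fun (u : {u : ℕ // L ≤ u}) => fun (f : {f : ℕ → ℕ // f ∈ F}) =>
      (⟨(⌊Int.fract (S f.1 u.1 / α) * (K + 1)⌋).toNat, hcell f.1 u.1⟩ : Fin (K + 1)))
  have hflr : ∀ f : {f : ℕ → ℕ // f ∈ F},
      ⌊Int.fract (S f.1 u.1 / α) * (K + 1)⌋ = ⌊Int.fract (S f.1 v.1 / α) * (K + 1)⌋ := by
    intro f
    have := congrFun hmap f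
    have h1 : (⌊Int.fract (S f.1 u.1 / α) * (K + 1)⌋).toNat
        = (⌊Int.fract (S f.1 v.1 / α) * (K + 1)⌋).toNat := by
      simpa using congrArg Fin.val this
    have h2 : (0:ℤ) ≤ ⌊Int.fract (S f.1 u.1 / α) * (K + 1)⌋ :=
      Int.floor_nonneg.2 (mul_nonneg (Int.fract_nonneg _) (by positivity))
    have h3 : (0:ℤ) ≤ ⌊Int.fract (S f.1 v.1 / α) * (K + 1)⌋ :=
      Int.floor_nonneg.2 (mul_nonneg (Int.fract_nonneg _) (by positivity))
    omega
  have hne : u.1 ≠ v.1 := fun h => huv (Subtype.ext h)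
  rcases lt_or_gt_of_ne hne with h | h
  · exact main u v h hflr
  · exact main v u h (fun f => (hflr f).symm)


private lemma aux_dense (α : ℝ) (hirr : Irrational α) {s t : ℝ} (hs : 0 ≤ s) (hst : s < t)
    (ht : t ≤ 1) : ∃ w : ℕ, s ≤ Int.fract (α * w) ∧ Int.fract (α * w) < t := by
  classical
  have hδ0 : 0 < t - s := by linarith
  obtain ⟨K, hK⟩ := exists_nat_one_div_lt hδ0
  have hcell : ∀ u : ℕ, (⌊Int.fract (α * u) * (K + 1)⌋).toNat < K + 1 := by
    intro u
    have h0 : (0:ℝ) ≤ Int.fract (α * u) := Int.fract_nonneg _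
    have h1 : Int.fract (α * u) < 1 := Int.fract_lt_one _
    have h2 : Int.fract (α * u) * (K + 1) < ((K + 1 : ℕ) : ℝ) := by push_cast; nlinarith
    have h3 : ⌊Int.fract (α * u) * (K + 1)⌋ < ((K + 1 : ℕ) : ℤ) :=
      Int.floor_lt.2 (by exact_mod_cast h2)
    omega
  -- get u < v with close fractional parts
  have main : ∀ u v : ℕ, u < v →
      ⌊Int.fract (α * u) * (K + 1)⌋ = ⌊Int.fract (α * v) * (K + 1)⌋ →
      ∃ w : ℕ, s ≤ Int.fract (α * w) ∧ Int.fract (α * w) < t := by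
    intro u v huv hfl
    set x := Int.fract (α * u) with hx
    set y := Int.fract (α * v) with hy
    have hxy : |y - x| < 1 / (K + 1) := by
      have h1 : (⌊x * (K+1)⌋ : ℝ) ≤ x * (K+1) := Int.floor_le _
      have h2 : x * (K+1) < ⌊x * (K+1)⌋ + 1 := Int.lt_floor_add_one _
      have h3 : (⌊y * (K+1)⌋ : ℝ) ≤ y * (K+1) := Int.floor_le _
      have h4 : y * (K+1) < ⌊y * (K+1)⌋ + 1 := Int.lt_floor_add_one _
      rw [hfl] at h1 h2
      have hK1 : (0:ℝ) < (K:ℝ) + 1 := by positivity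
      rw [abs_lt]
      constructor
      · rw [neg_lt, neg_sub, lt_div_iff₀ hK1]; nlinarith
      · rw [lt_div_iff₀ hK1]; nlinarith
    have hδ : |y - x| < t - s := lt_trans hxy (by exact_mod_cast hK)
    -- ρ = y - x = α*(v-u) - M
    set M : ℤ := ⌊α * v⌋ - ⌊α * u⌋ with hM
    set ρ : ℝ := y - x with hρ
    have hkey : α * ((v : ℝ) - u) = (M : ℝ) + ρ := by
      have h1 : α * (u:ℝ) = ⌊α * u⌋ + x := by rw [hx]; rw [Int.floor_add_fract]
      have h2 : α * (v:ℝ) = ⌊α * v⌋ + y := by rw [hy]; rw [Int.floor_add_fract]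
      rw [hρ, hM]; push_cast; linarith
    have hρ0 : ρ ≠ 0 := by
      intro h0
      have : α * ((v : ℝ) - u) = (M : ℝ) := by rw [hkey, h0, add_zero]
      have huv' : ((v : ℝ) - u) ≠ 0 := by
        have : (u:ℝ) < v := by exact_mod_cast huv
        intro h; linarith
      have : α = (M : ℝ) / ((v:ℝ) - u) := by field_simp at this ⊢; linarith [this]
      have hvu : ((v - u : ℕ) : ℝ) = (v:ℝ) - u := by
        have := le_of_lt huv; push_cast [this]; ring
      apply hirr
      refine ⟨(M : ℚ) / ((v:ℚ) - u), ?_⟩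
      push_cast
      rw [this]
    rcases lt_or_gt_of_ne hρ0 with hneg | hpos
    · -- ρ < 0 : use σ = -ρ
      set σ : ℝ := -ρ with hσ
      have hσ0 : 0 < σ := by rw [hσ]; linarith
      have hσδ : σ < t - s := by
        have := abs_lt.1 hδ; rw [hσ]; linarith [this.1]
      obtain ⟨k, hk1, hk2⟩ : ∃ k : ℕ, 1 - t < k * σ ∧ (k:ℝ) * σ < 1 - s := by
        refine ⟨⌊(1-t)/σ⌋₊ + 1, ?_, ?_⟩
        · have h5 := Nat.lt_floor_add_one ((1-t)/σ)
          push_cast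
          calc 1 - t = ((1-t)/σ) * σ := by field_simp
            _ < ((⌊(1-t)/σ⌋₊ : ℝ) + 1) * σ := by
                apply mul_lt_mul_of_pos_right h5 hσ0
        · have hfl2 : (⌊(1-t)/σ⌋₊ : ℝ) * σ ≤ ((1-t)/σ) * σ := by
            apply mul_le_mul_of_nonneg_right
              (Nat.floor_le (div_nonneg (by linarith) (le_of_lt hσ0))) (le_of_lt hσ0)
          have h6 : ((1-t)/σ) * σ = 1 - t := by field_simp
          push_cast
          nlinarith
      have hkσ1 : k * σ < 1 := by nlinarith
      have hkσ0 : 0 < (k:ℝ) * σ := by nlinarith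
      refine ⟨k * (v - u), ?_, ?_⟩ <;>
      · have hvu : ((v - u : ℕ) : ℝ) = (v:ℝ) - u := by
          have := le_of_lt huv; push_cast [this]; ring
        have hval : α * ((k * (v - u) : ℕ) : ℝ) = ((k * M : ℤ) : ℝ) + (-(k * σ)) := by
          push_cast [hvu]
          have : α * ((k:ℝ) * ((v:ℝ) - u)) = k * (α * ((v:ℝ) - u)) := by ring
          rw [this, hkey, hσ]; push_cast; ring
        have hfr : Int.fract (α * ((k * (v - u) : ℕ) : ℝ)) = 1 - k * σ := by
          rw [hval, add_comm, Int.fract_add_intCast]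
          rw [show (-(k * σ) : ℝ) = -(k*σ) from rfl]
          rw [Int.fract_neg]
          · rw [Int.fract_eq_self.2 ⟨le_of_lt hkσ0, hkσ1⟩]
          · rw [Int.fract_eq_self.2 ⟨le_of_lt hkσ0, hkσ1⟩]; linarith
        rw [hfr]
        linarith
    · -- ρ > 0
      obtain ⟨k, hk1, hk2⟩ : ∃ k : ℕ, s ≤ k * ρ ∧ (k:ℝ) * ρ < t := by
        refine ⟨⌈s/ρ⌉₊, ?_, ?_⟩
        · have h5 := Nat.le_ceil (s/ρ)
          have h2 : (s/ρ) * ρ ≤ (⌈s/ρ⌉₊:ℝ) * ρ := mul_le_mul_of_nonneg_right h5 (le_of_lt hpos)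
          have h6 : (s/ρ) * ρ = s := by field_simp
          linarith
        · have hceil : (⌈s/ρ⌉₊ : ℝ) < s/ρ + 1 :=
            Nat.ceil_lt_add_one (div_nonneg hs (le_of_lt hpos))
          have h7 := abs_lt.1 hδ
          have h2 : (⌈s/ρ⌉₊:ℝ) * ρ < (s/ρ + 1) * ρ := mul_lt_mul_of_pos_right hceil hpos
          have h3 : (s/ρ + 1) * ρ = s + ρ := by field_simp
          nlinarith [h7.2]
      have hkρ1 : k * ρ < 1 := by linarith
      have hkρ0 : 0 ≤ k * ρ := le_trans hs hk1
      refine ⟨k * (v - u), ?_, ?_⟩ <;>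
      · have hvu : ((v - u : ℕ) : ℝ) = (v:ℝ) - u := by
          have := le_of_lt huv; push_cast [this]; ring
        have hval : α * ((k * (v - u) : ℕ) : ℝ) = ((k * M : ℤ) : ℝ) + (k * ρ) := by
          push_cast [hvu]
          have : α * ((k:ℝ) * ((v:ℝ) - u)) = k * (α * ((v:ℝ) - u)) := by ring
          rw [this, hkey]; push_cast; ring
        have hfr : Int.fract (α * ((k * (v - u) : ℕ) : ℝ)) = k * ρ := by
          rw [hval, add_comm, Int.fract_add_intCast, Int.fract_eq_self.2 ⟨hkρ0, hkρ1⟩]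
        rw [hfr]
        linarith
  obtain ⟨u, v, huv, hmap⟩ := Finite.exists_ne_map_eq_of_infinite
    (fun (u : ℕ) => (⟨(⌊Int.fract (α * u) * (K + 1)⌋).toNat, hcell u⟩ : Fin (K + 1)))
  have hfl : ⌊Int.fract (α * u) * (K + 1)⌋ = ⌊Int.fract (α * v) * (K + 1)⌋ := by
    have h1 := congrArg Fin.val hmap
    simp only at h1
    have h2 : (0:ℤ) ≤ ⌊Int.fract (α * u) * (K + 1)⌋ :=
      Int.floor_nonneg.2 (mul_nonneg (Int.fract_nonneg _) (by positivity))
    have h3 : (0:ℤ) ≤ ⌊Int.fract (α * v) * (K + 1)⌋ :=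
      Int.floor_nonneg.2 (mul_nonneg (Int.fract_nonneg _) (by positivity))
    omega
  rcases lt_or_gt_of_ne huv with h | h
  · exact main u v h hfl
  · exact main v u h hfl.symm

private lemma spectra_main (α γ : ℝ) (hα : 0 < α) (hγ0 : 0 < γ)
    (A : Set ℕ) (hA : JSet A) (F : Finset (ℕ → ℕ)) (f₀ : ℕ → ℕ) (hf₀ : f₀ ∈ F)
    (ε : ℕ → ℝ) (hε0 : ∀ m, 0 < ε m) (hε1 : ∀ m, ε m ≤ ((1:ℝ)/2)^m/8/4)
    (w : ℕ → ℕ)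
    (hdich : (∀ m, 2*(((1:ℝ)/2)^m/8) ≤ Int.fract (α * w m) ∧
               Int.fract (α * w m) < 2*(((1:ℝ)/2)^m/8) + (((1:ℝ)/2)^m/8)/2)
      ∨ ((∀ m, w m = 0) ∧ ∀ (D zz : ℤ) (m : ℕ), |(D:ℝ) - α * zz| < ε m → (D:ℝ) = α * zz)) :
    ∃ (a : ℕ) (H : Finset ℕ), H.Nonempty ∧
      ∀ f ∈ F, a + ∑ n ∈ H, f n ∈ spectrumMap α γ '' A := by
  classical
  set φ : ℕ → ℝ := fun m => ((1:ℝ)/2)^m/8 with hφ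
  have hφ0 : ∀ m, 0 < φ m := fun m => by rw [hφ]; positivity
  have hφ8 : ∀ m, φ m ≤ 1/8 := by
    intro m
    have : ((1:ℝ)/2)^m ≤ 1 := pow_le_one₀ (by norm_num) (by norm_num)
    rw [hφ]; simp only; linarith
  -- blocks
  have hstep : ∀ L m : ℕ, ∃ t : ℕ × ℕ, L ≤ t.1 ∧ t.1 < t.2 ∧
      ∀ f ∈ F, ∃ zz : ℤ, |(∑ n ∈ Finset.Ico t.1 t.2, ((f n : ℝ) - (f₀ n : ℝ))) - α * zz| < ε m :=
    fun L m => aux_pigeon α hα F f₀ (hε0 m) L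
  choose step hstep1 hstep2 hstep3 using hstep
  set bl : ℕ → ℕ × ℕ :=
    fun m => Nat.rec (motive := fun _ => ℕ × ℕ) (step 0 0) (fun m ih => step ih.2 (m+1)) m
    with hbl
  have hbls : ∀ m, bl (m+1) = step (bl m).2 (m+1) := fun m => rfl
  have hbl12 : ∀ m, (bl m).1 < (bl m).2 := by
    intro m
    cases m with
    | zero => exact hstep2 0 0
    | succ m => rw [hbls]; exact hstep2 _ _
  have hblmono : ∀ m, (bl m).2 ≤ (bl (m+1)).1 := by
    intro m; rw [hbls]; exact hstep1 _ _
  have hmono : ∀ m m' : ℕ, m < m' → (bl m).2 ≤ (bl m').1 := by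
    intro m m' h
    induction m' with
    | zero => omega
    | succ n ih =>
      rcases Nat.lt_succ_iff_lt_or_eq.1 h with h' | h'
      · exact le_trans (ih h') (le_trans (le_of_lt (hbl12 n)) (hblmono n))
      · subst h'; exact hblmono m
  set T : (ℕ → ℕ) → ℕ → ℕ := fun f m => ∑ n ∈ Finset.Ico (bl m).1 (bl m).2, f n with hT
  have hsubst : ∀ (f : ℕ → ℕ) (m : ℕ),
      (∑ n ∈ Finset.Ico (bl m).1 (bl m).2, ((f n : ℝ) - (f₀ n : ℝ)))
        = (T f m : ℝ) - (T f₀ m : ℝ) := by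
    intro f m
    rw [hT, Finset.sum_sub_distrib]
    push_cast
    ring
  have happ : ∀ (m : ℕ) (f : ℕ → ℕ), ∃ zz : ℤ, f ∈ F →
      |((T f m : ℝ) - (T f₀ m : ℝ)) - α * zz| < ε m := by
    intro m f
    by_cases hf : f ∈ F
    · have hprop : ∀ f ∈ F, ∃ zz : ℤ,
          |(∑ n ∈ Finset.Ico (bl m).1 (bl m).2, ((f n : ℝ) - (f₀ n : ℝ))) - α * zz| < ε m := by
        cases m with
        | zero => exact hstep3 0 0
        | succ m' => rw [hbls]; exact hstep3 _ _
      obtain ⟨zz, hzz⟩ := hprop f hf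
      exact ⟨zz, fun _ => by rwa [hsubst f m] at hzz⟩
    · exact ⟨0, fun h => absurd h hf⟩
  choose z hz using happ
  set P : ℕ → ℕ := fun m => F.sup (fun f => (z m f).natAbs) + ⌈((T f₀ m : ℝ) + 1)/α⌉₊ with hP
  have hPz : ∀ m, ∀ f ∈ F, (0:ℤ) ≤ (P m : ℤ) + z m f := by
    intro m f hf
    have h1 : (z m f).natAbs ≤ P m :=
      le_trans (Finset.le_sup (f := fun f => (z m f).natAbs) hf) (Nat.le_add_right _ _)
    omega
  have hPT : ∀ m, (T f₀ m : ℝ) + 1 ≤ α * P m := by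
    intro m
    have h1 : ((T f₀ m : ℝ) + 1)/α ≤ (⌈((T f₀ m : ℝ) + 1)/α⌉₊ : ℝ) := Nat.le_ceil _
    have h2 : (⌈((T f₀ m : ℝ) + 1)/α⌉₊ : ℝ) ≤ (P m : ℝ) := by
      rw [hP]
      push_cast
      linarith [(Nat.cast_nonneg (F.sup fun f => (z m f).natAbs) : (0:ℝ) ≤ _)]
    have h3 : ((T f₀ m : ℝ) + 1)/α * α = (T f₀ m : ℝ) + 1 := by field_simp
    nlinarith
  set F' : (ℕ → ℕ) → Bool → ℕ → ℕ :=
    fun f j m => ((P m : ℤ) + z m f).toNat + (if j then w m else 0) with hF'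
  set c : Bool → ℕ → ℝ :=
    fun j m => α * P m - (T f₀ m : ℝ) - φ m / 4 +
      (if j then ((⌊α * (w m : ℝ)⌋ : ℤ) : ℝ) else 0) with hc
  set η : (ℕ → ℕ) → Bool → ℕ → ℝ := fun f j m =>
    (α * z m f - ((T f m : ℝ) - (T f₀ m : ℝ))) + φ m / 4 +
      (if j then Int.fract (α * (w m : ℝ)) else 0) with hη
  have hkey : ∀ f ∈ F, ∀ (j : Bool) (m : ℕ),
      α * ((F' f j m : ℕ) : ℝ) = (T f m : ℝ) + c j m + η f j m := by
    intro f hf j m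
    have h1 : ((F' f j m : ℕ) : ℝ)
        = (P m : ℝ) + (z m f : ℝ) + (if j then (w m : ℝ) else 0) := by
      have e1 : (((P m : ℤ) + z m f).toNat : ℤ) = (P m : ℤ) + z m f :=
        Int.toNat_of_nonneg (hPz m f hf)
      have e2 : ((((P m : ℤ) + z m f).toNat : ℕ) : ℝ) = (P m : ℝ) + (z m f : ℝ) := by
        exact_mod_cast congrArg (fun x : ℤ => (x : ℝ)) e1
      rw [hF']
      simp only
      rw [Nat.cast_add, e2]
      cases j <;> simp
    have hfl : α * (w m : ℝ) = ((⌊α * (w m : ℝ)⌋ : ℤ) : ℝ) + Int.fract (α * (w m : ℝ)) :=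
      (Int.floor_add_fract _).symm
    rw [h1, hc, hη]
    cases j
    · simp only [Bool.false_eq_true, if_false, add_zero]
      ring
    · simp only [if_true]
      linear_combination hfl
  have he : ∀ f ∈ F, ∀ m, |α * z m f - ((T f m : ℝ) - (T f₀ m : ℝ))| < ε m := by
    intro f hf m
    have := hz m f hf
    rwa [abs_sub_comm] at this
  -- apply J-set property
  set Fam : Finset (ℕ → ℕ) := F.image (fun f => F' f false) ∪ F.image (fun f => F' f true)
    with hFam
  have hFamne : Fam.Nonempty := by
    refine ⟨F' f₀ false, ?_⟩
    rw [hFam]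
    exact Finset.mem_union_left _ (Finset.mem_image_of_mem _ hf₀)
  obtain ⟨a, Ht, hHtne, hmem⟩ := hA Fam hFamne
  have hx : ∀ f ∈ F, ∀ j : Bool, a + ∑ m ∈ Ht, F' f j m ∈ A := by
    intro f hf j
    apply hmem
    rw [hFam]
    cases j
    · exact Finset.mem_union_left _ (Finset.mem_image_of_mem _ hf)
    · exact Finset.mem_union_right _ (Finset.mem_image_of_mem _ hf)
  set Φ : ℝ := ∑ m ∈ Ht, φ m with hΦ
  have hΦ0 : 0 < Φ := Finset.sum_pos (fun m _ => hφ0 m) hHtne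
  have hΦ4 : Φ ≤ 1/4 := phi_sum_le Ht
  have hc0 : ∀ (j : Bool) (m : ℕ), 0 ≤ c j m := by
    intro j m
    have h1 := hPT m
    have h2 := hφ8 m
    have h3 : (0:ℝ) ≤ (if j then ((⌊α * (w m : ℝ)⌋ : ℤ) : ℝ) else 0) := by
      cases j
      · simp
      · simp only [if_true]
        exact_mod_cast Int.floor_nonneg.2 (by positivity)
    rw [hc]
    simp only
    linarith
  set X : Bool → ℝ := fun j => α * a + γ + ∑ m ∈ Ht, c j m with hX
  have hX0 : ∀ j, 0 ≤ X j := by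
    intro j
    rw [hX]
    simp only
    have h1 : (0:ℝ) ≤ ∑ m ∈ Ht, c j m := Finset.sum_nonneg (fun m _ => hc0 j m)
    positivity
  have hXfr : Int.fract (X true) = Int.fract (X false) := by
    have h1 : X true = X false + ((∑ m ∈ Ht, ⌊α * (w m : ℝ)⌋ : ℤ) : ℝ) := by
      rw [hX]
      simp only
      have h2 : ∀ m ∈ Ht, c true m = c false m + ((⌊α * (w m : ℝ)⌋ : ℤ) : ℝ) := by
        intro m _
        rw [hc]; simp
      rw [Finset.sum_congr rfl h2, Finset.sum_add_distrib]
      push_cast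
      ring
    rw [h1, Int.fract_add_intCast]
  set ηs : (ℕ → ℕ) → Bool → ℝ := fun f j => ∑ m ∈ Ht, η f j m with hηs
  have hcommon : ∃ (j : Bool) (aI : ℤ), 0 ≤ aI ∧ ∀ f ∈ F, ⌊X j + ηs f j⌋ = aI := by
    rcases hdich with hgw | ⟨hw0, hexact⟩
    · -- irrational-style : two phase windows
      have hηf : ∀ f ∈ F, 0 < ηs f false ∧ ηs f false < Φ/2 := by
        intro f hf
        constructor
        · apply Finset.sum_pos _ hHtne
          intro m _
          have h1 := he f hf m
          have h2 := hε1 m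
          rw [abs_lt] at h1
          rw [hη]
          simp only [Bool.false_eq_true, if_false, add_zero]
          have h3 : ε m ≤ φ m / 4 := by rw [hφ]; simpa using h2
          linarith [h1.1]
        · have h4 : ∀ m ∈ Ht, η f false m < φ m / 2 := by
            intro m _
            have h1 := he f hf m
            have h2 := hε1 m
            rw [abs_lt] at h1
            rw [hη]
            simp only [Bool.false_eq_true, if_false, add_zero]
            have h3 : ε m ≤ φ m / 4 := by rw [hφ]; simpa using h2
            linarith [h1.2]
          calc ηs f false < ∑ m ∈ Ht, φ m / 2 := Finset.sum_lt_sum_of_nonempty hHtne h4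
            _ = Φ/2 := by rw [hΦ, Finset.sum_div]
      have hηt : ∀ f ∈ F, 2*Φ < ηs f true ∧ ηs f true < 3*Φ := by
        intro f hf
        have hlow : ∀ m ∈ Ht, 2 * φ m < η f true m := by
          intro m _
          have h1 := he f hf m
          have h2 := hε1 m
          rw [abs_lt] at h1
          have h5 := (hgw m).1
          rw [hη]
          simp only [if_true]
          have h3 : ε m ≤ φ m / 4 := by rw [hφ]; simpa using h2
          have h6 : 2 * φ m ≤ Int.fract (α * (w m : ℝ)) := by rw [hφ]; simpa using h5
          linarith [h1.1]
        have hhigh : ∀ m ∈ Ht, η f true m < 3 * φ m := by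
          intro m _
          have h1 := he f hf m
          have h2 := hε1 m
          rw [abs_lt] at h1
          have h5 := (hgw m).2
          rw [hη]
          simp only [if_true]
          have h3 : ε m ≤ φ m / 4 := by rw [hφ]; simpa using h2
          have h6 : Int.fract (α * (w m : ℝ)) < 2 * φ m + φ m / 2 := by
            rw [hφ]; simpa using h5
          linarith [h1.2]
        constructor
        · calc 2*Φ = ∑ m ∈ Ht, 2 * φ m := by rw [hΦ, Finset.mul_sum]
            _ < ηs f true := Finset.sum_lt_sum_of_nonempty hHtne hlow
        · calc ηs f true < ∑ m ∈ Ht, 3 * φ m := Finset.sum_lt_sum_of_nonempty hHtne hhigh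
            _ = 3*Φ := by rw [hΦ, Finset.mul_sum]
      by_cases hfr : Int.fract (X false) < 1 - Φ/2
      · refine ⟨false, ⌊X false⌋, Int.floor_nonneg.2 (hX0 false), ?_⟩
        intro f hf
        obtain ⟨h1, h2⟩ := hηf f hf
        have hXd : X false = (⌊X false⌋ : ℝ) + Int.fract (X false) := (Int.floor_add_fract _).symm
        rw [Int.floor_eq_iff]
        constructor
        · linarith [Int.floor_le (X false)]
        · push_cast
          linarith [hXd]
      · push_neg at hfr
        refine ⟨true, ⌊X true⌋ + 1, by linarith [Int.floor_nonneg.2 (hX0 true)], ?_⟩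
        intro f hf
        obtain ⟨h1, h2⟩ := hηt f hf
        have hXd : X true = (⌊X true⌋ : ℝ) + Int.fract (X true) := (Int.floor_add_fract _).symm
        have hfr1 : Int.fract (X true) < 1 := Int.fract_lt_one _
        have hfr2 : 1 - Φ/2 ≤ Int.fract (X true) := by rw [hXfr]; exact hfr
        rw [Int.floor_eq_iff]
        constructor
        · push_cast
          linarith
        · push_cast
          linarith
    · -- exact case
      have hηconst : ∀ f ∈ F, ηs f false = ∑ m ∈ Ht, φ m / 4 := by
        intro f hf
        apply Finset.sum_congr rfl
        intro m _
        have h0 : α * (z m f : ℝ) = (T f m : ℝ) - (T f₀ m : ℝ) := by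
          have h1 := hz m f hf
          have hD : (((T f m : ℤ) - (T f₀ m : ℤ) : ℤ) : ℝ) = (T f m : ℝ) - (T f₀ m : ℝ) := by
            push_cast; ring
          have h2 := hexact ((T f m : ℤ) - (T f₀ m : ℤ)) (z m f) m (by rw [hD]; exact h1)
          rw [hD] at h2
          linarith
        rw [hη]
        simp only [Bool.false_eq_true, if_false, add_zero]
        rw [h0]
        ring
      have hsum0 : (0:ℝ) ≤ ∑ m ∈ Ht, φ m / 4 :=
        Finset.sum_nonneg (fun m _ => by linarith [hφ0 m])
      refine ⟨false, ⌊X false + ∑ m ∈ Ht, φ m / 4⌋,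
        Int.floor_nonneg.2 (add_nonneg (hX0 false) hsum0), ?_⟩
      intro f hf
      rw [hηconst f hf]
  obtain ⟨j, aI, haI0, hfloor⟩ := hcommon
  -- assemble
  set Hbig : Finset ℕ := Ht.biUnion (fun m => Finset.Ico (bl m).1 (bl m).2) with hHbig
  have hHbigne : Hbig.Nonempty := by
    obtain ⟨m, hm⟩ := hHtne
    exact ⟨(bl m).1, Finset.mem_biUnion.2 ⟨m, hm, Finset.mem_Ico.2 ⟨le_refl _, hbl12 m⟩⟩⟩
  have hdisj : (↑Ht : Set ℕ).PairwiseDisjoint (fun m => Finset.Ico (bl m).1 (bl m).2) := by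
    intro m _ m' _ hne
    have hgen : ∀ p q : ℕ, p < q →
        Disjoint (Finset.Ico (bl p).1 (bl p).2) (Finset.Ico (bl q).1 (bl q).2) := by
      intro p q hpq
      apply Finset.disjoint_left.2
      intro n hn hn'
      have h1 := (Finset.mem_Ico.1 hn).2
      have h2 := (Finset.mem_Ico.1 hn').1
      have := hmono p q hpq
      omega
    rcases lt_or_gt_of_ne hne with h | h
    · exact hgen _ _ h
    · exact (hgen _ _ h).symm
  have hHsum : ∀ f : ℕ → ℕ, ∑ n ∈ Hbig, f n = ∑ m ∈ Ht, T f m := by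
    intro f
    rw [hHbig, Finset.sum_biUnion hdisj]
  refine ⟨aI.toNat, Hbig, hHbigne, ?_⟩
  intro f hf
  refine ⟨a + ∑ m ∈ Ht, F' f j m, hx f hf j, ?_⟩
  have hreal : α * ((a + ∑ m ∈ Ht, F' f j m : ℕ) : ℝ) + γ
      = (X j + ηs f j) + ((∑ m ∈ Ht, T f m : ℕ) : ℝ) := by
    push_cast
    rw [mul_add, Finset.mul_sum]
    rw [Finset.sum_congr rfl (fun m _ => hkey f hf j m)]
    rw [hX, hηs]
    simp only
    rw [Finset.sum_add_distrib, Finset.sum_add_distrib]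
    ring
  have hfl2 : ⌊α * ((a + ∑ m ∈ Ht, F' f j m : ℕ) : ℝ) + γ⌋
      = aI + ((∑ m ∈ Ht, T f m : ℕ) : ℤ) := by
    rw [hreal, Int.floor_add_natCast, hfloor f hf]
  have hfl3 : spectrumMap α γ (a + ∑ m ∈ Ht, F' f j m)
      = (aI + ((∑ m ∈ Ht, T f m : ℕ) : ℤ)).toNat := by
    rw [spectrumMap, ← Int.floor_toNat, hfl2]
  rw [hfl3, hHsum f]
  omega

theorem spectra_of_J (α γ : ℝ) (hα : 0 < α) (hγ0 : 0 < γ) (hγ1 : γ < 1)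
    (A : Set ℕ) (hA : JSet A) :
    JSet (spectrumMap α γ '' A) := by
  intro F hF
  classical
  obtain ⟨f₀, hf₀⟩ := hF
  by_cases hirr : Irrational α
  · have hw : ∀ m : ℕ, ∃ w : ℕ, 2*(((1:ℝ)/2)^m/8) ≤ Int.fract (α * w) ∧
        Int.fract (α * w) < 2*(((1:ℝ)/2)^m/8) + (((1:ℝ)/2)^m/8)/2 := by
      intro m
      have hp : (0:ℝ) < ((1:ℝ)/2)^m := by positivity
      have hp1 : ((1:ℝ)/2)^m ≤ 1 := pow_le_one₀ (by norm_num) (by norm_num)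
      exact aux_dense α hirr (by positivity) (by linarith) (by linarith)
    choose w hw1 hw2 using hw
    exact spectra_main α γ hα hγ0 A hA F f₀ hf₀ (fun m => ((1:ℝ)/2)^m/8/4)
      (fun m => by positivity) (fun m => le_refl _) w (Or.inl (fun m => ⟨hw1 m, hw2 m⟩))
  · obtain ⟨r, hr⟩ : ∃ r : ℚ, (r : ℝ) = α := by
      rw [Irrational] at hirr
      push_neg at hirr
      simpa [Set.range] using hirr
    have hq0 : (0:ℝ) < (r.den : ℝ) := by
      have := r.pos
      exact_mod_cast this
    set ε : ℕ → ℝ := fun m => min (((1:ℝ)/2)^m/8/4) (1/(2*(r.den : ℝ))) with hε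
    have hε0 : ∀ m, 0 < ε m := fun m => lt_min (by positivity) (by positivity)
    have hε1 : ∀ m, ε m ≤ ((1:ℝ)/2)^m/8/4 := fun m => min_le_left _ _
    have hexact : ∀ (D zz : ℤ) (m : ℕ), |(D:ℝ) - α * zz| < ε m → (D:ℝ) = α * zz := by
      intro D zz m h
      have h2 : |(D:ℝ) - α * zz| < 1/(2*(r.den:ℝ)) := lt_of_lt_of_le h (min_le_right _ _)
      have hαr : α = (r.num : ℝ) / (r.den : ℝ) := by rw [← hr, Rat.cast_def]
      have key : |((D * (r.den : ℤ) - r.num * zz : ℤ) : ℝ)| < 1/2 := by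
        have e1 : ((D * (r.den : ℤ) - r.num * zz : ℤ) : ℝ)
            = ((D:ℝ) - α * zz) * (r.den : ℝ) := by
          have hd : (r.den:ℝ) ≠ 0 := ne_of_gt hq0
          rw [hαr]
          push_cast
          field_simp
        rw [e1, abs_mul, abs_of_pos hq0]
        calc |(D:ℝ) - α * zz| * (r.den:ℝ) < (1/(2*(r.den:ℝ))) * (r.den:ℝ) :=
              mul_lt_mul_of_pos_right h2 hq0
          _ = 1/2 := by
              field_simp
      have hz0 : D * (r.den : ℤ) - r.num * zz = 0 := by
        by_contra hne
        have h3 : (1:ℤ) ≤ |D * (r.den : ℤ) - r.num * zz| := Int.one_le_abs hne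
        have h4 : (1:ℝ) ≤ |((D * (r.den : ℤ) - r.num * zz : ℤ) : ℝ)| := by
          rw [← Int.cast_abs]
          exact_mod_cast h3
        linarith
      have h5 : (D:ℝ) * (r.den:ℝ) = (r.num:ℝ) * zz := by
        have : ((D * (r.den : ℤ) : ℤ) : ℝ) = ((r.num * zz : ℤ) : ℝ) := by
          exact_mod_cast sub_eq_zero.1 (by exact_mod_cast hz0)
        push_cast at this
        linarith
      rw [hαr]
      rw [div_mul_eq_mul_div, eq_div_iff (ne_of_gt hq0)]
      linarith
    exact spectra_main α γ hα hγ0 A hA F f₀ hf₀ ε hε0 hε1 (fun _ => 0)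
      (Or.inr ⟨fun _ => rfl, hexact⟩)
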